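/- Let d ≥ 1 and let Ω be a bounded convex domain in ℝ^d with smooth boundary such that |Ω| = 1. For any p ∈ (0,1) and any u ∈ H¹(Ω) such that ∂ₙu = 0 on ∂Ω, one has ‖∇u‖_{L²(Ω)}² ≥ λ₂·[‖u‖_{L²(Ω)}² − ‖u‖_{L^{p+1}(Ω)}²]. -/

import Mathlib

open MeasureTheory Real Filter Set
open scoped RealInnerProductSpace Topology NNReal ENNReal

noncomputable section

/-- `d`-dimensional Euclidean space. -/
abbrev Euc (d : ℕ) := EuclideanSpace ℝ (Fin d)

variable {d : ℕ}

/-- First-order partial derivative `∂ᵢ u (x)`. -/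
def pd1 (u : Euc d → ℝ) (i : Fin d) (x : Euc d) : ℝ :=
  fderiv ℝ u x (EuclideanSpace.single i 1)

/-- Second-order partial derivative `∂²ᵢⱼ u (x)`. -/
def pd2 (u : Euc d → ℝ) (i j : Fin d) (x : Euc d) : ℝ :=
  fderiv ℝ (fun y => fderiv ℝ u y (EuclideanSpace.single j 1)) x
    (EuclideanSpace.single i 1)

/-- Laplacian `Δu (x)`. -/
def lapl (u : Euc d → ℝ) (x : Euc d) : ℝ := ∑ i : Fin d, pd2 u i i x

/-- Squared Frobenius norm `|Hess u (x)|²` of the Hessian. -/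
def hessSq (u : Euc d → ℝ) (x : Euc d) : ℝ :=
  ∑ i : Fin d, ∑ j : Fin d, (pd2 u i j x) ^ 2

/-- `Ω` is a bounded domain with smooth boundary (given by a smooth defining function). -/
def SmoothBoundedDomain (Ω : Set (Euc d)) : Prop :=
  IsOpen Ω ∧ Bornology.IsBounded Ω ∧ IsConnected Ω ∧
  ∃ Φ : Euc d → ℝ, ContDiff ℝ (⊤ : ℕ∞) Φ ∧ Ω = {x | Φ x < 0} ∧
    frontier Ω = {x | Φ x = 0} ∧ ∀ x ∈ frontier Ω, gradient Φ x ≠ 0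

/-- `nv` is the unit outward normal vector field on `∂Ω`. -/
def OuterNormal (Ω : Set (Euc d)) (nv : Euc d → Euc d) : Prop :=
  ∃ Φ : Euc d → ℝ, ContDiff ℝ (⊤ : ℕ∞) Φ ∧ Ω = {x | Φ x < 0} ∧
    frontier Ω = {x | Φ x = 0} ∧
    ∀ x ∈ frontier Ω, gradient Φ x ≠ 0 ∧ nv x = ‖gradient Φ x‖⁻¹ • gradient Φ x

/-- Homogeneous Neumann boundary condition `∂ₙ u = 0` on `∂Ω`. -/
def NeumannBC (Ω : Set (Euc d)) (nv : Euc d → Euc d) (u : Euc d → ℝ) : Prop :=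
  ∀ x ∈ frontier Ω, (inner ℝ (gradient u x) (nv x) : ℝ) = 0

/-- Membership in `H¹(Ω)`. -/
def MemH1 (Ω : Set (Euc d)) (u : Euc d → ℝ) : Prop :=
  ContDiffOn ℝ 1 u (closure Ω) ∧
  IntegrableOn (fun x => (u x) ^ 2) Ω volume ∧
  IntegrableOn (fun x => ‖gradient u x‖ ^ 2) Ω volume

/-- Membership in `H²(Ω)`. -/
def MemH2 (Ω : Set (Euc d)) (u : Euc d → ℝ) : Prop :=
  ContDiffOn ℝ 2 u (closure Ω) ∧
  IntegrableOn (fun x => (u x) ^ 2) Ω volume ∧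
  IntegrableOn (fun x => ‖gradient u x‖ ^ 2) Ω volume ∧
  IntegrableOn (fun x => hessSq u x) Ω volume ∧
  IntegrableOn (fun x => (lapl u x) ^ 2) Ω volume

/-- `‖∇u‖_{L²(Ω)}²`. -/
def grad2 (Ω : Set (Euc d)) (u : Euc d → ℝ) : ℝ := ∫ x in Ω, ‖gradient u x‖ ^ 2

/-- `‖u‖_{L^q(Ω)}²`. -/
def nsq (Ω : Set (Euc d)) (u : Euc d → ℝ) (q : ℝ) : ℝ :=
  (∫ x in Ω, |u x| ^ q) ^ (2 / q)

/-- `‖u‖_{L^q(Ω)}`. -/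
def normLq (Ω : Set (Euc d)) (u : Euc d → ℝ) (q : ℝ) : ℝ :=
  (∫ x in Ω, |u x| ^ q) ^ (1 / q)

/-- Entropy `∫_Ω u² log (u²/‖u‖₂²)`. -/
def ent (Ω : Set (Euc d)) (u : Euc d → ℝ) : ℝ :=
  ∫ x in Ω, (u x) ^ 2 * Real.log ((u x) ^ 2 / nsq Ω u 2)

/-- The second (i.e. lowest positive) Neumann eigenvalue of `-Δ` on `Ω`, via its
variational characterization as the optimal Poincaré constant. -/
def lam2 (Ω : Set (Euc d)) : ℝ :=
  sInf { r : ℝ | ∃ u : Euc d → ℝ, MemH1 Ω u ∧ (∫ x in Ω, u x) = 0 ∧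
    (∫ x in Ω, (u x) ^ 2) ≠ 0 ∧ r = grad2 Ω u / ∫ x in Ω, (u x) ^ 2 }

/-- Best constant `Λ★` in the interpolation inequality
`‖∇u‖₂² ≥ Λ★/(p-1) [‖u‖_{p+1}² - ‖u‖₂²]`. -/
def LamStar (Ω : Set (Euc d)) (p : ℝ) : ℝ :=
  sSup { L : ℝ | ∀ u : Euc d → ℝ, MemH1 Ω u →
    grad2 Ω u ≥ L / (p - 1) * (nsq Ω u (p + 1) - nsq Ω u 2) }

/-- Optimal constant in the logarithmic Sobolev inequality on `Ω`. -/
def LamStarLS (Ω : Set (Euc d)) : ℝ :=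
  sSup { L : ℝ | ∀ u : Euc d → ℝ, MemH1 Ω u → grad2 Ω u ≥ L / 2 * ent Ω u }

/-- `ε(p) = (p-1)/|p-1|`. -/
def eps (p : ℝ) : ℝ := (p - 1) / |p - 1|

/-- `u` is a positive solution of `-ε(p) Δu + λ u - u^p = 0` in `Ω`
with homogeneous Neumann boundary conditions. -/
def IsPositiveSolution (Ω : Set (Euc d)) (nv : Euc d → Euc d) (p lam : ℝ)
    (u : Euc d → ℝ) : Prop :=
  ContDiffOn ℝ 2 u (closure Ω) ∧ (∀ x ∈ Ω, 0 < u x) ∧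
  (∀ x ∈ Ω, - eps p * lapl u x + lam * u x - u x ^ p = 0) ∧
  NeumannBC Ω nv u

/-- `μ₁`, the infimum of the parameters `λ > 0` for which a non-constant positive
solution exists. -/
def mu1 (Ω : Set (Euc d)) (nv : Euc d → Euc d) (p : ℝ) : ℝ :=
  sInf { lam : ℝ | 0 < lam ∧ ∃ u : Euc d → ℝ,
    IsPositiveSolution Ω nv p lam u ∧ ¬ ∃ c : ℝ, ∀ x ∈ Ω, u x = c }

/-- The inequality of problem (P2): `‖∇u‖₂² ≥ ε(p) [m ‖u‖_{p+1}² - l ‖u‖₂²]` for all `u ∈ H¹(Ω)`. -/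
def IneqP2 (Ω : Set (Euc d)) (p m l : ℝ) : Prop :=
  ∀ u : Euc d → ℝ, MemH1 Ω u →
    grad2 Ω u ≥ eps p * (m * nsq Ω u (p + 1) - l * nsq Ω u 2)

/-- `μ ↦ λ(μ)`, the best constant in problem (P2): smallest admissible `l` if
`ε(p) > 0`, largest if `ε(p) < 0`. -/
def lambdaBest (Ω : Set (Euc d)) (p m : ℝ) : ℝ :=
  if 1 < p then sInf { l : ℝ | IneqP2 Ω p m l } else sSup { l : ℝ | IneqP2 Ω p m l }

/-- `λ ↦ μ(λ)`, the inverse function of `μ ↦ λ(μ)`: the best `m` in (P2). -/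
def muBest (Ω : Set (Euc d)) (p l : ℝ) : ℝ :=
  if 1 < p then sSup { m : ℝ | IneqP2 Ω p m l } else sInf { m : ℝ | IneqP2 Ω p m l }

/-- `μ₂ = inf{λ > 0 : μ(λ) ≠ λ}`. -/
def mu2 (Ω : Set (Euc d)) (p : ℝ) : ℝ :=
  sInf { l : ℝ | 0 < l ∧ muBest Ω p l ≠ l }

/-- Lowest Neumann eigenvalue `λ₁(Ω, V)` of the Schrödinger operator `-Δ + V`,
via its variational characterization. -/
def schroLam1 (Ω : Set (Euc d)) (V : Euc d → ℝ) : ℝ :=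
  sInf { r : ℝ | ∃ u : Euc d → ℝ, MemH1 Ω u ∧ (∫ x in Ω, (u x) ^ 2) ≠ 0 ∧
    r = (grad2 Ω u + ∫ x in Ω, V x * (u x) ^ 2) / ∫ x in Ω, (u x) ^ 2 }

/-- Optimal Keller–Lieb–Thirring constant
`ν(μ) = -ε(p) inf{λ₁(Ω, -ε(p)φ) : φ ∈ L^q₊(Ω), ‖φ^{ε(p)}‖_q = μ}` with `q = (p+1)/|p-1|`. -/
def nuKLT (Ω : Set (Euc d)) (p m : ℝ) : ℝ :=
  - eps p * sInf { r : ℝ | ∃ φ : Euc d → ℝ, (∀ x ∈ Ω, 0 ≤ φ x) ∧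
    IntegrableOn (fun x => |φ x ^ eps p| ^ ((p + 1) / |p - 1|)) Ω volume ∧
    normLq Ω (fun x => φ x ^ eps p) ((p + 1) / |p - 1|) = m ∧
    r = schroLam1 Ω (fun x => - eps p * φ x) }

/-- `μ₃ = inf{μ > 0 : ν(μ) ≠ μ}`. -/
def mu3 (Ω : Set (Euc d)) (p : ℝ) : ℝ :=
  sInf { m : ℝ | 0 < m ∧ nuKLT Ω p m ≠ m }

/-- `θ★(p,d) = (d-1)² p / (d(d+2)+p)`. -/
def thetaStar (p : ℝ) (d : ℕ) : ℝ :=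
  ((d : ℝ) - 1) ^ 2 * p / ((d : ℝ) * ((d : ℝ) + 2) + p)

/-- `p ∈ (0,1) ∪ (1, 2^* - 1)` where `2^* = 2d/(d-2)` if `d ≥ 3` and `2^* = ∞` if `d ≤ 2`. -/
def pAdmissible (d : ℕ) (p : ℝ) : Prop :=
  (0 < p ∧ p < 1) ∨ (1 < p ∧ (3 ≤ d → p < ((d : ℝ) + 2) / ((d : ℝ) - 2)))

/-- The functional `J_Λ`. -/
def JLam (Ω : Set (Euc d)) (p L : ℝ) (u : Euc d → ℝ) : ℝ :=
  if p = 1 then grad2 Ω u - L / 2 * ent Ω u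
  else grad2 Ω u - L / (p - 1) * (nsq Ω u (p + 1) - nsq Ω u 2)

/-- Lemma 9 (Bakry–Emery estimate): for `p ∈ (0,1)` and any `u ∈ H¹(Ω)` with
`∂ₙu = 0` on `∂Ω`, `‖∇u‖₂² ≥ λ₂ [‖u‖₂² - ‖u‖_{p+1}²]`. -/
theorem statement_11 {d : ℕ} (hd : 1 ≤ d) (p : ℝ) (hp : 0 < p ∧ p < 1)
    (Ω : Set (Euc d)) (nv : Euc d → Euc d)
    (hΩ : SmoothBoundedDomain Ω) (hconv : Convex ℝ Ω) (hnv : OuterNormal Ω nv)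
    (hvol : volume Ω = 1)
    (u : Euc d → ℝ) (hu : MemH1 Ω u) (hbc : NeumannBC Ω nv u) :
    grad2 Ω u ≥ lam2 Ω * (nsq Ω u 2 - nsq Ω u (p + 1)) := by
  obtain ⟨hopen, -, -, -⟩ := hΩ
  obtain ⟨hucd, hu2, hug⟩ := hu
  have hmeas : MeasurableSet Ω := hopen.measurableSet
  haveI hprob : IsProbabilityMeasure (volume.restrict Ω) :=
    ⟨by rw [Measure.restrict_apply_univ]; exact hvol⟩
  have hucont : ContinuousOn u Ω := hucd.continuousOn.mono subset_closure
  have huae : AEStronglyMeasurable u (volume.restrict Ω) :=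
    hucont.aestronglyMeasurable hmeas
  -- integrability of u
  have huint : Integrable u (volume.restrict Ω) := by
    refine Integrable.mono' ((integrable_const (1:ℝ)).add hu2) huae ?_
    filter_upwards with x
    have : |u x| ≤ 1 + u x ^ 2 := by nlinarith [sq_nonneg (|u x| - 1), sq_abs (u x)]
    simpa using this
  -- integrability of |u|^(p+1)
  have hp1pos : (0:ℝ) < p + 1 := by linarith [hp.1]
  have hcontrpow : Continuous fun t : ℝ => t ^ (p+1) := by
    refine continuous_iff_continuousAt.mpr fun x => ?_
    exact Real.continuousAt_rpow_const x (p+1) (Or.inr hp1pos.le)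
  have hupint : Integrable (fun x => |u x| ^ (p+1)) (volume.restrict Ω) := by
    refine Integrable.mono' ((integrable_const (1:ℝ)).add hu2)
      ((hcontrpow.comp_continuousOn hucont.abs).aestronglyMeasurable hmeas) ?_
    filter_upwards with x
    simp only [Pi.add_apply]
    have h0 : (0:ℝ) ≤ |u x| ^ (p+1) := Real.rpow_nonneg (abs_nonneg _) _
    rw [Real.norm_of_nonneg h0]
    rcases le_or_gt (|u x|) 1 with h | h
    · have : |u x| ^ (p+1) ≤ 1 := Real.rpow_le_one (abs_nonneg _) h hp1pos.le
      nlinarith [sq_nonneg (u x)]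
    · have h2 : |u x| ^ (p+1) ≤ |u x| ^ (2:ℝ) :=
        Real.rpow_le_rpow_of_exponent_le h.le (by linarith [hp.2])
      have h3 : |u x| ^ (2:ℝ) = u x ^ 2 := by
        rw [show (2:ℝ) = ((2:ℕ):ℝ) by norm_num, Real.rpow_natCast, sq_abs]
      nlinarith
  set c : ℝ := ∫ x in Ω, u x with hc
  set v : Euc d → ℝ := fun x => u x - c with hv
  -- gradient of v equals gradient of u
  have hgradv : gradient v = gradient u := by
    funext x
    simp [hv, gradient, fderiv_sub_const]
  -- lam2 nonneg
  have hlam2 : 0 ≤ lam2 Ω := by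
    apply Real.sInf_nonneg
    rintro r ⟨w, hw, -, -, rfl⟩
    apply div_nonneg
    · exact setIntegral_nonneg hmeas fun x _ => by positivity
    · exact setIntegral_nonneg hmeas fun x _ => sq_nonneg _
  -- grad2 nonneg
  have hgrad2 : 0 ≤ grad2 Ω u := setIntegral_nonneg hmeas fun x _ => by positivity
  -- nsq Ω u 2 = ∫ u^2
  have hnsq2 : nsq Ω u 2 = ∫ x in Ω, u x ^ 2 := by
    unfold nsq
    rw [show (2:ℝ)/2 = 1 by norm_num, Real.rpow_one]
    congr 1
    funext x
    rw [show (2:ℝ) = ((2:ℕ):ℝ) by norm_num, Real.rpow_natCast, sq_abs]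
  -- Jensen: c^2 ≤ nsq Ω u (p+1)
  have hBnn : 0 ≤ ∫ x in Ω, |u x| ^ (p+1) :=
    setIntegral_nonneg hmeas fun x _ => Real.rpow_nonneg (abs_nonneg _) _
  have hc2 : c ^ 2 ≤ nsq Ω u (p + 1) := by
    have hjensen : (∫ x in Ω, |u x|) ^ (p+1) ≤ ∫ x in Ω, |u x| ^ (p+1) := by
      have := ConvexOn.map_integral_le (μ := volume.restrict Ω)
        (f := fun x => |u x|) (convexOn_rpow (p := p+1) (by linarith [hp.1]))
        (hcontrpow.continuousOn) isClosed_Ici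
        (by filter_upwards with x; exact mem_Ici.mpr (abs_nonneg _)) huint.abs
        (by exact hupint)
      simpa using this
    have hAnn : 0 ≤ ∫ x in Ω, |u x| := setIntegral_nonneg hmeas fun x _ => abs_nonneg _
    have hA : (∫ x in Ω, |u x|) ≤ (∫ x in Ω, |u x| ^ (p+1)) ^ (1/(p+1)) := by
      have h1 : (∫ x in Ω, |u x|) = ((∫ x in Ω, |u x|) ^ (p+1)) ^ (1/(p+1)) := by
        rw [← Real.rpow_mul hAnn, mul_one_div, div_self (ne_of_gt hp1pos), Real.rpow_one]
      rw [h1]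
      exact Real.rpow_le_rpow (Real.rpow_nonneg hAnn _) hjensen (by positivity)
    have hcabs : |c| ≤ ∫ x in Ω, |u x| := by
      simpa using norm_integral_le_integral_norm (μ := volume.restrict Ω) u
    have hsq : c ^ 2 ≤ ((∫ x in Ω, |u x| ^ (p+1)) ^ (1/(p+1))) ^ 2 := by
      rw [← sq_abs c]
      exact pow_le_pow_left₀ (abs_nonneg c) (hcabs.trans hA) 2
    calc c ^ 2 ≤ ((∫ x in Ω, |u x| ^ (p+1)) ^ (1/(p+1))) ^ 2 := hsq
      _ = nsq Ω u (p+1) := by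
          unfold nsq
          rw [← Real.rpow_natCast ((∫ x in Ω, |u x| ^ (p+1)) ^ (1/(p+1))) 2,
            ← Real.rpow_mul hBnn]
          congr 1
          push_cast
          ring
    -- done
  -- integral computations for v
  have hvint2 : IntegrableOn (fun x => v x ^ 2) Ω volume := by
    have : (fun x => v x ^ 2) = fun x => u x ^ 2 - (2*c) * u x + c ^ 2 := by
      funext x; simp [hv]; ring
    rw [this]
    exact ((hu2.sub (huint.const_mul _)).add (integrable_const _))
  have hvzero : (∫ x in Ω, v x) = 0 := by
    rw [show (fun x => v x) = fun x => u x - c from rfl]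
    rw [integral_sub huint (integrable_const c), integral_const]
    simp [← hc]
  have hvsq : (∫ x in Ω, v x ^ 2) = (∫ x in Ω, u x ^ 2) - c ^ 2 := by
    have heq : (fun x => v x ^ 2) = fun x => u x ^ 2 - (2*c) * u x + c ^ 2 := by
      funext x; simp [hv]; ring
    have hint1 : Integrable (fun x => u x ^ 2 - 2*c*u x) (volume.restrict Ω) :=
      hu2.sub (huint.const_mul _)
    have h1 : (∫ x in Ω, (u x ^ 2 - 2*c*u x + c^2)) =
        (∫ x in Ω, (u x ^ 2 - 2*c*u x)) + c^2 := by
      rw [integral_add hint1 (integrable_const _), integral_const]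
      simp
    have h2 : (∫ x in Ω, (u x ^ 2 - 2*c*u x)) = (∫ x in Ω, u x ^ 2) - 2*c*c := by
      rw [integral_sub hu2 (huint.const_mul _), MeasureTheory.integral_const_mul, ← hc]
    rw [heq, h1, h2]
    ring
  have hgrad2v : grad2 Ω v = grad2 Ω u := by unfold grad2; rw [hgradv]
  rcases eq_or_ne (∫ x in Ω, v x ^ 2) 0 with hz | hz
  · -- degenerate case: ∫ u² = c² ≤ nsq_{p+1}
    have : nsq Ω u 2 - nsq Ω u (p+1) ≤ 0 := by
      rw [hnsq2]
      have : (∫ x in Ω, u x ^ 2) = c ^ 2 := by linarith [hvsq, hz]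
      linarith
    have := mul_nonpos_of_nonneg_of_nonpos hlam2 this
    linarith
  · have hvpos : 0 < ∫ x in Ω, v x ^ 2 :=
      lt_of_le_of_ne (setIntegral_nonneg hmeas fun x _ => sq_nonneg _) (Ne.symm hz)
    have hmem : grad2 Ω v / (∫ x in Ω, v x ^ 2) ∈
        { r : ℝ | ∃ w : Euc d → ℝ, MemH1 Ω w ∧ (∫ x in Ω, w x) = 0 ∧
          (∫ x in Ω, (w x) ^ 2) ≠ 0 ∧ r = grad2 Ω w / ∫ x in Ω, (w x) ^ 2 } := by
      refine ⟨v, ⟨?_, hvint2, ?_⟩, hvzero, hz, rfl⟩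
      · exact hucd.sub contDiffOn_const
      · rw [hgradv]; exact hug
    have hbdd : BddBelow { r : ℝ | ∃ w : Euc d → ℝ, MemH1 Ω w ∧ (∫ x in Ω, w x) = 0 ∧
          (∫ x in Ω, (w x) ^ 2) ≠ 0 ∧ r = grad2 Ω w / ∫ x in Ω, (w x) ^ 2 } := by
      refine ⟨0, ?_⟩
      rintro r ⟨w, hw, -, -, rfl⟩
      apply div_nonneg
      · exact setIntegral_nonneg hmeas fun x _ => by positivity
      · exact setIntegral_nonneg hmeas fun x _ => sq_nonneg _
    have hle : lam2 Ω ≤ grad2 Ω v / (∫ x in Ω, v x ^ 2) := csInf_le hbdd hmem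
    have hmul : lam2 Ω * (∫ x in Ω, v x ^ 2) ≤ grad2 Ω v := by
      rw [← le_div_iff₀ hvpos]; exact hle
    rw [hgrad2v, hvsq] at hmul
    have hstep : lam2 Ω * ((∫ x in Ω, u x ^ 2) - nsq Ω u (p+1)) ≤
        lam2 Ω * ((∫ x in Ω, u x ^ 2) - c ^ 2) :=
      mul_le_mul_of_nonneg_left (by linarith) hlam2
    rw [hnsq2]
    linarith
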